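/- arXiv:1409.4730 — 3 statements merged into one kernel-verified Lean document; each statement's English description precedes it below -/
import Mathlib

section
/- Let A be an MV-algebra satisfying the identity 2x² = (2x)² for all x (Chang's variety axiom). Then for every natural number n ≥ 1, the identity 2ⁿx² = (2ⁿx)² holds in A. -/
/-- An MV-algebra `(A, ⊕, ¬, 0)`. -/
class MV (A : Type*) where
  op : A → A → A
  neg : A → A
  zero : A
  op_assoc : ∀ x y z : A, op (op x y) z = op x (op y z)
  op_comm : ∀ x y : A, op x y = op y x
  op_zero : ∀ x : A, op x zero = x
  neg_neg : ∀ x : A, neg (neg x) = x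
  op_neg_zero : ∀ x : A, op x (neg zero) = neg zero
  mv6 : ∀ x y : A, op (neg (op (neg x) y)) y = op (neg (op (neg y) x)) x

namespace MV

variable {A : Type*} [MV A]

/-- `1 := ¬0`. -/
def one : A := neg zero

/-- `x ⊙ y := ¬(¬x ⊕ ¬y)`. -/
def odot (x y : A) : A := neg (op (neg x) (neg y))

/-- `sup(x,y) := (x ⊙ ¬y) ⊕ y`. -/
def ssup (x y : A) : A := op (odot x (neg y)) y

/-- `inf(x,y) := (x ⊕ ¬y) ⊙ y`. -/
def sinf (x y : A) : A := odot (op x (neg y)) y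

/-- `x ≤ y` iff `¬x ⊕ y = 1`. -/
def le (x y : A) : Prop := op (neg x) y = one

/-- `x ≤ y` iff `inf(x,y) = x`. -/
def leInf (x y : A) : Prop := sinf x y = x

/-- `n`-fold sum `nx = x ⊕ ⋯ ⊕ x`. -/
def nsm : ℕ → A → A
  | 0, _ => zero
  | n + 1, x => op x (nsm n x)

/-- `x² := x ⊙ x`. -/
def sq (x : A) : A := odot x x

end MV


open MV in
theorem nsm_add' {A : Type*} [MV A] (m k : ℕ) (x : A) :
    nsm (m + k) x = op (nsm m x) (nsm k x) := by
  induction m with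
  | zero => simp [nsm, op_comm, op_zero]
  | succ m ih =>
      rw [Nat.succ_add]
      simp [nsm, ih, op_assoc]

open MV in
/-- If `2x² = (2x)²` holds in an MV-algebra then for every `n ≥ 1`,
`2ⁿx² = (2ⁿx)²` holds. -/
theorem chang_pow_two_identity {A : Type*} [MV A]
    (chang : ∀ x : A, op (sq x) (sq x) = sq (op x x)) :
    ∀ n : ℕ, 1 ≤ n → ∀ x : A, nsm (2 ^ n) (sq x) = sq (nsm (2 ^ n) x) := by
  intro n hn x
  induction n with
  | zero => omega
  | succ n ih =>
      rcases Nat.eq_or_lt_of_le hn with h | h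
      · -- n = 0, so 2^1 = 2
        have hn0 : n = 0 := by omega
        subst hn0
        show nsm 2 (sq x) = sq (nsm 2 x)
        have h2 : ∀ y : A, nsm 2 y = op y y := by
          intro y; show op y (op y zero) = op y y; rw [op_zero]
        rw [h2, h2, chang]
      · have hn1 : 1 ≤ n := by omega
        have ihn := ih hn1
        have hp : 2 ^ (n+1) = 2 ^ n + 2 ^ n := by ring
        rw [hp, nsm_add', nsm_add', ihn, chang]
end

section
/- Let A be an MV-algebra satisfying 2x² = (2x)² for all x. If an element x ∈ A satisfies 2ⁿx = 1 for some natural number n, then 2x = 1. In particular, every element of finite order in such an algebra has order at most 2. -/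
namespace MV

variable {A : Type*} [MV A]

-- basic lemmas
lemma zero_op (x : A) : op zero x = x := by rw [op_comm, op_zero]
lemma op_one (x : A) : op x one = one := op_neg_zero x
lemma one_op (x : A) : op one x = one := by rw [op_comm]; exact op_neg_zero x
lemma neg_one : (neg one : A) = zero := neg_neg zero
lemma neg_inj {x y : A} (h : neg x = neg y) : x = y := by
  rw [← neg_neg x, h, neg_neg]

lemma neg_op_self (x : A) : op (neg x) x = one := by
  have h := mv6 x (one : A)
  simp only [op_one, neg_one, zero_op] at h
  exact h.symm

lemma op_neg_self (x : A) : op x (neg x) = one := by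
  rw [op_comm]; exact neg_op_self x

lemma le_refl (x : A) : le x x := neg_op_self x
lemma le_one (x : A) : le x one := op_one _
lemma zero_le (x : A) : le zero x := by
  show op (neg zero) x = one
  exact one_op x

lemma le_antisymm {x y : A} (h1 : le x y) (h2 : le y x) : x = y := by
  have h := mv6 x y
  rw [le] at h1 h2
  rw [h1, h2, neg_one, zero_op, zero_op] at h
  exact h.symm

lemma eq_one_of_one_le {x : A} (h : le one x) : x = one :=
  (le_antisymm h (le_one x)).symm

lemma le_op_right (x c : A) : le x (op x c) := by
  show op (neg x) (op x c) = one
  rw [← op_assoc, neg_op_self, one_op]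

lemma le_iff_exists {x y : A} : le x y ↔ ∃ c, y = op x c := by
  constructor
  · intro h
    refine ⟨neg (op (neg y) x), ?_⟩
    have hm := mv6 x y
    rw [le] at h
    rw [h, neg_one, zero_op] at hm
    rw [op_comm]
    exact hm
  · rintro ⟨c, rfl⟩
    exact le_op_right x c

lemma le_trans {x y z : A} (h1 : le x y) (h2 : le y z) : le x z := by
  obtain ⟨c, rfl⟩ := le_iff_exists.mp h1
  obtain ⟨d, rfl⟩ := le_iff_exists.mp h2
  rw [op_assoc]
  exact le_op_right x _

lemma op_le_op {a b c d : A} (h1 : le a b) (h2 : le c d) : le (op a c) (op b d) := by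
  obtain ⟨p, rfl⟩ := le_iff_exists.mp h1
  obtain ⟨q, rfl⟩ := le_iff_exists.mp h2
  apply le_iff_exists.mpr ⟨op p q, ?_⟩
  rw [op_assoc, op_assoc, ← op_assoc p c q, op_comm p c, op_assoc]

lemma neg_le_neg {x y : A} (h : le x y) : le (neg y) (neg x) := by
  show op (neg (neg y)) (neg x) = one
  rw [neg_neg, op_comm]
  exact h

lemma odot_comm (x y : A) : odot x y = odot y x := by rw [odot, odot, op_comm]
lemma odot_assoc (x y z : A) : odot (odot x y) z = odot x (odot y z) := by
  simp only [odot, neg_neg, op_assoc]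
lemma odot_one (x : A) : odot x one = x := by
  rw [odot, neg_one, op_zero, neg_neg]
lemma odot_zero (x : A) : odot x zero = zero := by
  rw [odot]
  show neg (op (neg x) one) = zero
  rw [op_one, neg_one]
lemma zero_odot (x : A) : odot zero x = zero := by rw [odot_comm, odot_zero]
lemma odot_neg_self (x : A) : odot x (neg x) = zero := by
  rw [odot, neg_neg, neg_op_self, neg_one]
lemma neg_odot (x y : A) : neg (odot x y) = op (neg x) (neg y) := by
  rw [odot, neg_neg]
lemma neg_op (x y : A) : neg (op x y) = odot (neg x) (neg y) := by
  rw [odot, neg_neg, neg_neg]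

lemma odot_le_odot {a b c d : A} (h1 : le a b) (h2 : le c d) :
    le (odot a c) (odot b d) := by
  exact neg_le_neg (op_le_op (neg_le_neg h1) (neg_le_neg h2))

lemma le_iff_odot {x y : A} : le x y ↔ odot x (neg y) = zero := by
  rw [le, odot, neg_neg]
  constructor
  · intro h; rw [h, neg_one]
  · intro h; apply neg_inj; rw [neg_one]; exact h

-- residuation
lemma resid {a b c : A} : le (odot a b) c ↔ le b (op (neg a) c) := by
  rw [le_iff_odot, le_iff_odot]
  have h1 : odot (odot a b) (neg c) = odot b (odot a (neg c)) := by
    rw [odot_comm a b, odot_assoc]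
  have h2 : neg (op (neg a) c) = odot a (neg c) := by
    rw [odot, neg_neg]
  rw [h1, h2]


-- ssup is a join
lemma ssup_comm (x y : A) : ssup x y = ssup y x := by
  have h := mv6 x y
  show op (odot x (neg y)) y = op (odot y (neg x)) x
  have e1 : odot x (neg y) = neg (op (neg x) y) := by rw [odot, neg_neg]
  have e2 : odot y (neg x) = neg (op (neg y) x) := by rw [odot, neg_neg]
  rw [e1, e2]; exact h

lemma le_ssup_right (x y : A) : le y (ssup x y) := by
  show le y (op (odot x (neg y)) y)
  rw [op_comm]
  exact le_op_right y _

lemma le_ssup_left (x y : A) : le x (ssup x y) := by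
  rw [ssup_comm]; exact le_ssup_right y x

lemma ssup_le {x y c : A} (h1 : le x c) (h2 : le y c) : le (ssup x y) c := by
  have step1 : le (ssup x y) (ssup c y) :=
    op_le_op (odot_le_odot h1 (le_refl (neg y))) (le_refl y)
  have step2 : ssup c y = c := by
    rw [ssup_comm]
    show op (odot y (neg c)) c = c
    rw [le_iff_odot.mp h2, zero_op]
  rw [step2] at step1
  exact step1

lemma ssup_zero (x : A) : ssup x zero = x := by
  show op (odot x (neg zero)) zero = x
  rw [op_zero]
  show odot x one = x
  exact odot_one x

lemma zero_ssup (x : A) : ssup zero x = x := by rw [ssup_comm, ssup_zero]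

-- distributivity of odot over ssup
lemma odot_ssup (a b c : A) : odot a (ssup b c) = ssup (odot a b) (odot a c) := by
  apply le_antisymm
  · rw [resid]
    apply ssup_le
    · apply le_trans (y := op (neg a) (odot a b))
      · rw [← resid]; exact le_refl _
      · exact op_le_op (le_refl _) (le_ssup_left _ _)
    · apply le_trans (y := op (neg a) (odot a c))
      · rw [← resid]; exact le_refl _
      · exact op_le_op (le_refl _) (le_ssup_right _ _)
  · apply ssup_le
    · exact odot_le_odot (le_refl a) (le_ssup_left b c)
    · exact odot_le_odot (le_refl a) (le_ssup_right b c)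

lemma sq_le_self (x : A) : le (sq x) x := by
  show op (neg (sq x)) x = one
  have : neg (sq x) = op (neg x) (neg x) := by rw [sq, odot, neg_neg]
  rw [this, op_assoc, neg_op_self, op_one]

lemma sq_one : (sq one : A) = one := by
  rw [sq, odot, neg_one, op_zero]; rfl

-- the element b = x ∨ ¬x satisfies 2b = 1
lemma two_ssup_neg (x : A) : op (ssup x (neg x)) (ssup x (neg x)) = one := by
  apply eq_one_of_one_le
  have h := op_le_op (le_ssup_right x (neg x)) (le_ssup_left x (neg x))
  rw [neg_op_self] at h
  exact h

lemma sq_ssup_neg (x : A) : sq (ssup x (neg x)) = ssup (sq x) (sq (neg x)) := by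
  set b := ssup x (neg x) with hb
  have h : sq b = ssup (odot b x) (odot b (neg x)) := by
    rw [sq]
    conv_lhs => rw [hb]
    rw [odot_comm, odot_ssup]
  have h1 : odot b x = sq x := by
    rw [odot_comm, hb, odot_ssup, odot_neg_self, ssup_zero, sq]
  have h2 : odot b (neg x) = sq (neg x) := by
    rw [odot_comm, hb, odot_ssup, odot_comm (neg x) x, odot_neg_self, zero_ssup, sq]
  rw [h, h1, h2]


lemma op_rearrange (s t : A) : op (op s s) (op t t) = op (op s t) (op s t) := by
  rw [op_assoc, op_assoc]
  congr 1
  rw [← op_assoc, op_comm]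

lemma odot_sq_sq (a b : A) : odot (sq a) (sq b) = sq (odot a b) := by
  calc odot (sq a) (sq b)
      = neg (op (op (neg a) (neg a)) (op (neg b) (neg b))) := by
        rw [sq, sq, odot, neg_odot, neg_odot]
    _ = neg (op (op (neg a) (neg b)) (op (neg a) (neg b))) := by
        rw [op_rearrange]
    _ = sq (odot a b) := by rw [sq, odot, neg_odot]

/-- Key lemma: in a Chang algebra, `4x = 1` implies `2x = 1`. -/
lemma key_lemma (chang : ∀ x : A, op (sq x) (sq x) = sq (op x x))
    {x : A} (H : op (op x x) (op x x) = one) : op x x = one := by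
  set u := sq (neg x) with hu_def
  have hnegu : neg u = op x x := by
    rw [hu_def, sq, odot, neg_neg, neg_neg]
  -- u² = ¬(4x) = 0
  have husq : sq u = zero := by
    rw [sq, odot, hnegu, H, neg_one]
  -- u ⊙ x² = 0
  have hux : odot u (sq x) = zero := by
    rw [hu_def, odot_sq_sq, odot_comm, odot_neg_self]
    rw [sq, zero_odot]
  set m := ssup (sq x) u with hm_def
  -- 2m = 1
  have hm2 : op m m = one := by
    have hb := chang (ssup x (neg x))
    rw [two_ssup_neg, sq_one, sq_ssup_neg] at hb
    exact hb
  -- m² = (x²)²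
  have hmsq : sq m = sq (sq x) := by
    have husq' : odot u u = zero := husq
    have e1 : odot m (sq x) = sq (sq x) := by
      rw [odot_comm, hm_def, odot_ssup, odot_comm (sq x) u, hux, ssup_zero]
      rfl
    have e2 : odot m u = zero := by
      rw [odot_comm, hm_def, odot_ssup, hux, husq', zero_ssup]
    show odot m m = sq (sq x)
    nth_rewrite 2 [hm_def]
    rw [odot_ssup, e1, e2, ssup_zero]
  -- 2(x⁴) = (2m)² = 1
  have h4 : op (sq (sq x)) (sq (sq x)) = one := by
    have := chang m
    rw [hm2, sq_one, hmsq] at this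
    exact this
  -- 1 = 2x⁴ ≤ 2x², so 2x² = 1
  have h2sq : op (sq x) (sq x) = one := by
    apply eq_one_of_one_le
    rw [← h4]
    exact op_le_op (sq_le_self (sq x)) (sq_le_self (sq x))
  -- (2x)² = 1, hence 2x = 1
  have := chang x
  rw [h2sq] at this
  apply eq_one_of_one_le
  rw [this]
  exact sq_le_self (op x x)

lemma nsm_add (a b : ℕ) (x : A) : nsm (a + b) x = op (nsm a x) (nsm b x) := by
  induction a with
  | zero => simp [nsm, zero_op]
  | succ n ih =>
      have : n + 1 + b = (n + b) + 1 := by omega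
      rw [this]
      show op x (nsm (n + b) x) = op (op x (nsm n x)) (nsm b x)
      rw [ih, op_assoc]

lemma nsm_two_mul (k : ℕ) (x : A) : nsm (2 * k) x = nsm k (op x x) := by
  induction k with
  | zero => rfl
  | succ n ih =>
      have : 2 * (n + 1) = 2 * n + 2 := by omega
      rw [this, nsm_add, ih]
      show op (nsm n (op x x)) (op x (nsm 1 x)) = op (op x x) (nsm n (op x x))
      show op (nsm n (op x x)) (op x (op x (nsm 0 x))) = _
      show op (nsm n (op x x)) (op x (op x zero)) = _
      rw [op_zero, op_comm]

end MV

open MV in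
/-- In an MV-algebra satisfying `2x² = (2x)²`: if `2ⁿx = 1` for some `n` then `2x = 1`.
In particular every element of finite order has order at most `2`. -/
theorem chang_order_at_most_two {A : Type*} [MV A]
    (chang : ∀ x : A, op (sq x) (sq x) = sq (op x x)) :
    (∀ (x : A) (n : ℕ), nsm (2 ^ n) x = one → op x x = one) ∧
    (∀ x : A, (∃ n : ℕ, 0 < n ∧ nsm n x = one) → op x x = one) := by
  have part1 : ∀ (x : A) (n : ℕ), nsm (2 ^ n) x = one → op x x = one := by
    intro x n
    induction n generalizing x with
    | zero =>
        intro h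
        have e : (2:ℕ) ^ 0 = 1 := rfl
        rw [e] at h
        have hx : x = one := by
          have h1 : nsm 1 x = x := by
            show op x (nsm 0 x) = x
            exact op_zero x
          rw [h1] at h; exact h
        rw [hx]; exact op_one one
    | succ n ih =>
        intro h
        have h2 : nsm (2 ^ n) (op x x) = one := by
          rw [← nsm_two_mul]
          have e : 2 * 2 ^ n = 2 ^ (n + 1) := by ring
          rw [e]; exact h
        exact key_lemma chang (ih (op x x) h2)
  refine ⟨part1, ?_⟩
  rintro x ⟨n, hn, hx⟩
  apply part1 x n
  have hle : n ≤ 2 ^ n := Nat.le_of_lt (Nat.lt_two_pow_self (n := n))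
  have e : 2 ^ n = (2 ^ n - n) + n := (Nat.sub_add_cancel hle).symm
  rw [e, nsm_add, hx, op_one]
end

section
/- Let A be a nontrivial MV-algebra (i.e. 0 ≠ 1) satisfying the identity 2x² = (2x)². Then there is no element x ∈ A with x = ¬x. -/
open MV in
/-- In a nontrivial MV-algebra satisfying `2x² = (2x)²`, no element equals its own negation. -/
theorem chang_no_fixpoint_of_neg {A : Type*} [MV A]
    (nontrivial : (zero : A) ≠ one)
    (chang : ∀ x : A, op (sq x) (sq x) = sq (op x x)) :
    ∀ x : A, x ≠ neg x := by
  intro x hx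
  have zero_op : ∀ y : A, op zero y = y := fun y => by rw [op_comm, op_zero]
  have neg_one : neg (one : A) = zero := MV.neg_neg zero
  have lem : ∀ y : A, op (neg y) y = one := by
    intro y
    have h := mv6 (neg zero : A) y
    rw [MV.neg_neg, zero_op, op_neg_zero] at h
    exact h
  have hxx : op x x = one := by
    have := lem x; rwa [← hx] at this
  have hsq : sq x = zero := by
    unfold MV.sq odot
    rw [← hx, hxx, neg_one]
  have hsq1 : sq (op x x) = one := by
    unfold MV.sq odot
    rw [hxx, neg_one, op_zero]
    rfl
  have := chang x
  rw [hsq, hsq1, op_zero] at this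
  exact nontrivial this
end
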